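/- arXiv:2012.06673 — 2 statements merged into one kernel-verified Lean document; each statement's English description precedes it below -/
import Mathlib

section
/- Let (M_j, Q_j)_{j≥1} be i.i.d. pairs with M_j > 0, A_n = M₁⋯M_n, and let Y_∞ = Σ_{n≥0} A_n Q_{n+1} converge absolutely a.s. Fix n ≥ 1 and suppose Q₁ and Y_n/A_n are both unbounded from above (each exceeds any level with positive probability). Then Y_∞ is unbounded from above. -/
open MeasureTheory ProbabilityTheory

open Filter in
lemma measurable_tsum_of_measurable' {Ω : Type*} {m : MeasurableSpace Ω} {f : ℕ → Ω → ℝ}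
    (hf : ∀ k, Measurable[m] (f k)) : Measurable[m] (fun ω => ∑' k, f k ω) := by
  classical
  have hS : ∀ K : ℕ, Measurable[m] (fun ω => ∑ k ∈ Finset.range K, f k ω) :=
    fun K => Finset.measurable_sum _ (fun k _ => hf k)
  have habs : ∀ K : ℕ, Measurable[m] (fun ω => ∑ k ∈ Finset.range K, |f k ω|) :=
    fun K => Finset.measurable_sum _ (fun k _ => (hf k).abs)
  have hSumMeas : MeasurableSet[m] {ω | Summable (fun k => f k ω)} := by
    have he : {ω | Summable (fun k => f k ω)}
        = ⋃ B : ℕ, ⋂ K : ℕ, {ω | ∑ k ∈ Finset.range K, |f k ω| ≤ (B : ℝ)} := by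
      ext ω
      simp only [Set.mem_setOf_eq, Set.mem_iUnion, Set.mem_iInter]
      constructor
      · intro h
        have habs' : Summable fun k => |f k ω| := h.abs
        obtain ⟨B, hB⟩ := exists_nat_ge (∑' k, |f k ω|)
        exact ⟨B, fun K => le_trans (Summable.sum_le_tsum _ (fun i _ => abs_nonneg _) habs') hB⟩
      · rintro ⟨B, hB⟩
        exact (summable_of_sum_range_le (fun k => abs_nonneg _) hB).of_abs
    rw [he]
    exact MeasurableSet.iUnion fun B => MeasurableSet.iInter fun K =>
      measurableSet_le (habs K) measurable_const
  have heq : (fun ω => ∑' k, f k ω) = Set.piecewise {ω | Summable (fun k => f k ω)}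
      (fun ω => liminf (fun K => ∑ k ∈ Finset.range K, f k ω) atTop) 0 := by
    funext ω
    by_cases h : Summable (fun k => f k ω)
    · rw [Set.piecewise_eq_of_mem _ _ _ (show ω ∈ {ω | Summable fun k => f k ω} from h)]
      exact (h.hasSum.tendsto_sum_nat.liminf_eq).symm
    · rw [Set.piecewise_eq_of_notMem _ _ _ (show ω ∉ {ω | Summable fun k => f k ω} from h),
        tsum_eq_zero_of_not_summable h]
      rfl
  rw [heq]
  exact Measurable.piecewise hSumMeas (Measurable.liminf hS) measurable_const


/-- With `(M_j, Q_j)` i.i.d., `M_j > 0`, `A_n = M₁⋯M_n`, `Y_n = Σ_{j=1}^n A_{j-1} Q_j`,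
and `Y_∞ = Σ_{n≥0} A_n Q_{n+1}` a.s. absolutely convergent: if `Q₁` and `Y_n / A_n` are
unbounded from above for some fixed `n ≥ 1`, then `Y_∞` is unbounded from above.
(Pairs are indexed from `0`.) -/
theorem stmt8 {Ω : Type*} [MeasurableSpace Ω] (P : Measure Ω) [IsProbabilityMeasure P]
    (M Q : ℕ → Ω → ℝ)
    (hmeas : ∀ j, Measurable (fun ω => (M j ω, Q j ω)))
    (hindep : iIndepFun (fun j ω => (M j ω, Q j ω)) P)
    (hident : ∀ j, P.map (fun ω => (M j ω, Q j ω)) = P.map (fun ω => (M 0 ω, Q 0 ω)))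
    (hMpos : ∀ j ω, 0 < M j ω)
    (hsum : ∀ᵐ ω ∂P, Summable (fun n => |(∏ i ∈ Finset.range n, M i ω) * Q n ω|))
    (n : ℕ) (hn : 1 ≤ n)
    (hQ1 : ∀ N : ℝ, 0 < P {ω | N < Q 0 ω})
    (hYA : ∀ N : ℝ, 0 < P {ω | N <
      (∑ j ∈ Finset.range n, (∏ i ∈ Finset.range j, M i ω) * Q j ω) /
        ∏ i ∈ Finset.range n, M i ω}) :
    ∀ N : ℝ, 0 < P {ω | N < ∑' k : ℕ, (∏ i ∈ Finset.range k, M i ω) * Q k ω} := by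
  classical
  intro N
  -- basic measurability
  have hMQ : ∀ j, Measurable (M j) ∧ Measurable (Q j) :=
    fun j => ⟨measurable_fst.comp (hmeas j), measurable_snd.comp (hmeas j)⟩
  -- comap measurability
  have hMc : ∀ (s : Set ℕ) (j : ℕ), j ∈ s →
      Measurable[⨆ i ∈ s, MeasurableSpace.comap (fun ω => (M i ω, Q i ω)) inferInstance] (M j) := by
    intro s j hj
    have h0 : Measurable[MeasurableSpace.comap (fun ω => (M j ω, Q j ω)) inferInstance]
        (fun ω => (M j ω, Q j ω)) := Measurable.of_comap_le le_rfl
    exact (measurable_fst.comp h0).mono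
      (le_biSup (fun i => MeasurableSpace.comap (fun ω => (M i ω, Q i ω)) inferInstance) hj) le_rfl
  have hQc : ∀ (s : Set ℕ) (j : ℕ), j ∈ s →
      Measurable[⨆ i ∈ s, MeasurableSpace.comap (fun ω => (M i ω, Q i ω)) inferInstance] (Q j) := by
    intro s j hj
    have h0 : Measurable[MeasurableSpace.comap (fun ω => (M j ω, Q j ω)) inferInstance]
        (fun ω => (M j ω, Q j ω)) := Measurable.of_comap_le le_rfl
    exact (measurable_snd.comp h0).mono
      (le_biSup (fun i => MeasurableSpace.comap (fun ω => (M i ω, Q i ω)) inferInstance) hj) le_rfl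
  -- independence of events over disjoint index sets
  have hindep' : ∀ (S₁ S₂ : Set ℕ), Disjoint S₁ S₂ → ∀ A B : Set Ω,
      MeasurableSet[⨆ i ∈ S₁, MeasurableSpace.comap (fun ω => (M i ω, Q i ω)) inferInstance] A →
      MeasurableSet[⨆ i ∈ S₂, MeasurableSpace.comap (fun ω => (M i ω, Q i ω)) inferInstance] B →
      P (A ∩ B) = P A * P B := by
    intro S₁ S₂ hd A B hA hB
    have h_le : ∀ i : ℕ, MeasurableSpace.comap (fun ω => (M i ω, Q i ω)) inferInstance ≤ _ :=
      fun i => (hmeas i).comap_le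
    exact (Indep_iff _ _ _).mp (indep_iSup_of_disjoint h_le hindep.iIndep hd) A B hA hB
  -- positivity of products
  have hApos : ∀ (s : Finset ℕ) ω, 0 < ∏ i ∈ s, M i ω :=
    fun s ω => Finset.prod_pos fun i _ => hMpos i ω
  -- key decomposition
  have key : ∀ ω, Summable (fun k => |(∏ i ∈ Finset.range k, M i ω) * Q k ω|) → ∀ p m : ℕ,
      (∑' k, (∏ i ∈ Finset.Ico p (p+k), M i ω) * Q (p+k) ω)
        = (∑ k ∈ Finset.range m, (∏ i ∈ Finset.Ico p (p+k), M i ω) * Q (p+k) ω)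
          + (∏ i ∈ Finset.Ico p (p+m), M i ω)
            * ∑' k, (∏ i ∈ Finset.Ico (p+m) (p+m+k), M i ω) * Q (p+m+k) ω := by
    intro ω hs p m
    have hsa : Summable (fun k => (∏ i ∈ Finset.range k, M i ω) * Q k ω) := hs.of_abs
    have hgs : Summable (fun k => (∏ i ∈ Finset.Ico p (p+k), M i ω) * Q (p+k) ω) := by
      have h1 : Summable (fun k => ((∏ i ∈ Finset.range p, M i ω)⁻¹)
          * ((∏ i ∈ Finset.range (p+k), M i ω) * Q (p+k) ω)) := by
        have h2 := (summable_nat_add_iff p).mpr hsa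
        exact ((h2.congr (fun k => by rw [add_comm]))).mul_left _
      refine h1.congr (fun k => ?_)
      rw [← Finset.prod_range_mul_prod_Ico (fun i => M i ω) (Nat.le_add_right p k), mul_assoc,
        inv_mul_cancel_left₀ (ne_of_gt (hApos _ ω))]
    rw [← Summable.sum_add_tsum_nat_add m hgs]
    congr 1
    rw [← tsum_mul_left]
    refine tsum_congr fun k => ?_
    have e1 : p + (k + m) = p + m + k := by ring
    rw [e1, ← Finset.prod_Ico_consecutive (fun i => M i ω) (Nat.le_add_right p m)
      (Nat.le_add_right (p+m) k), mul_assoc]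
  -- law of the shifted window
  have hlaw : ∀ p : ℕ, P.map (fun ω (i : Fin n) => (M (p + i) ω, Q (p + i) ω))
      = Measure.pi (fun _ : Fin n => P.map (fun ω => (M 0 ω, Q 0 ω))) := by
    intro p
    haveI : IsProbabilityMeasure (P.map (fun ω => (M 0 ω, Q 0 ω))) :=
      Measure.isProbabilityMeasure_map (hmeas 0).aemeasurable
    have hVmeas : Measurable (fun ω (i : Fin n) => (M (p + i) ω, Q (p + i) ω)) :=
      measurable_pi_lambda _ fun i => hmeas (p + i)
    refine (Measure.pi_eq fun s hs => ?_).symm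
    rw [Measure.map_apply hVmeas (MeasurableSet.univ_pi hs)]
    set sets' : ℕ → Set (ℝ × ℝ) :=
      fun j => if h : p ≤ j ∧ j - p < n then s ⟨j - p, h.2⟩ else Set.univ with hsets'
    have hsets'eq : ∀ i : Fin n, sets' (p + (i : ℕ)) = s i := by
      intro i
      have h2 : p + (i : ℕ) - p = (i : ℕ) := by omega
      rw [hsets']
      dsimp only
      rw [dif_pos (⟨Nat.le_add_right _ _, by rw [h2]; exact i.isLt⟩ :
        p ≤ p + (i : ℕ) ∧ p + (i : ℕ) - p < n)]
      simp only [h2, Fin.eta]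
    have hsets'meas : ∀ j ∈ Finset.image (fun i : Fin n => p + (i : ℕ)) Finset.univ,
        MeasurableSet (sets' j) := by
      intro j _
      rw [hsets']
      dsimp only
      split
      · exact hs _
      · exact MeasurableSet.univ
    have hpre : (fun ω (i : Fin n) => (M (p + i) ω, Q (p + i) ω)) ⁻¹' (Set.univ.pi s)
        = ⋂ j ∈ Finset.image (fun i : Fin n => p + (i : ℕ)) Finset.univ,
            (fun ω => (M j ω, Q j ω)) ⁻¹' (sets' j) := by
      ext ω
      simp only [Set.mem_preimage, Set.mem_pi, Set.mem_univ, forall_true_left, Set.mem_iInter,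
        Finset.mem_image, Finset.mem_univ, true_and]
      constructor
      · rintro h j ⟨i, rfl⟩
        rw [hsets'eq i]
        exact h i
      · intro h i
        have := h (p + i) ⟨i, rfl⟩
        rwa [hsets'eq i] at this
    rw [hpre, hindep.measure_inter_preimage_eq_mul _ hsets'meas,
      Finset.prod_image (fun i _ j _ h => Fin.ext (Nat.add_left_cancel h))]
    refine Finset.prod_congr rfl fun i _ => ?_
    rw [hsets'eq i, ← Measure.map_apply (hmeas _) (hs i), hident (p + i)]
  -- shifted hYA
  have hshift : ∀ c : ℝ, P {ω | c < (∑ k ∈ Finset.range n,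
        (∏ i ∈ Finset.range k, M (1+i) ω) * Q (1+k) ω) / ∏ i ∈ Finset.range n, M (1+i) ω}
      = P {ω | c < (∑ j ∈ Finset.range n, (∏ i ∈ Finset.range j, M i ω) * Q j ω) /
        ∏ i ∈ Finset.range n, M i ω} := by
    intro c
    have hcoord1 : ∀ i : ℕ, Measurable (fun y : Fin n → ℝ × ℝ =>
        (if h : i < n then y ⟨i, h⟩ else ((1 : ℝ), (0 : ℝ))).1) := by
      intro i
      by_cases h : i < n
      · simp only [dif_pos h]; exact measurable_fst.comp (measurable_pi_apply _)
      · simp only [dif_neg h]; exact measurable_const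
    have hcoord2 : ∀ i : ℕ, Measurable (fun y : Fin n → ℝ × ℝ =>
        (if h : i < n then y ⟨i, h⟩ else ((1 : ℝ), (0 : ℝ))).2) := by
      intro i
      by_cases h : i < n
      · simp only [dif_pos h]; exact measurable_snd.comp (measurable_pi_apply _)
      · simp only [dif_neg h]; exact measurable_const
    set E : (Fin n → ℝ × ℝ) → ℝ := fun y =>
      (∑ j ∈ Finset.range n, (∏ i ∈ Finset.range j,
          (if h : i < n then y ⟨i, h⟩ else ((1:ℝ),(0:ℝ))).1)
        * (if h : j < n then y ⟨j, h⟩ else ((1:ℝ),(0:ℝ))).2)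
        / ∏ i ∈ Finset.range n, (if h : i < n then y ⟨i, h⟩ else ((1:ℝ),(0:ℝ))).1 with hE
    have hEmeas : Measurable E := Measurable.div
      (Finset.measurable_sum _ fun j _ =>
        (Finset.measurable_prod _ fun i _ => hcoord1 i).mul (hcoord2 j))
      (Finset.measurable_prod _ fun i _ => hcoord1 i)
    have hEapp : ∀ z : ℕ → ℝ × ℝ, E (fun i : Fin n => z i)
        = (∑ j ∈ Finset.range n, (∏ i ∈ Finset.range j, (z i).1) * (z j).2)
          / ∏ i ∈ Finset.range n, (z i).1 := by
      intro z
      simp only [hE]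
      congr 1
      · refine Finset.sum_congr rfl fun j hj => ?_
        have hjn := Finset.mem_range.mp hj
        rw [dif_pos hjn]
        congr 1
        refine Finset.prod_congr rfl fun i hi => ?_
        rw [dif_pos (lt_trans (Finset.mem_range.mp hi) hjn)]
      · refine Finset.prod_congr rfl fun i hi => ?_
        rw [dif_pos (Finset.mem_range.mp hi)]
    have hBmeas : MeasurableSet {y : Fin n → ℝ × ℝ | c < E y} :=
      measurableSet_lt measurable_const hEmeas
    have hVmeas : ∀ p : ℕ, Measurable (fun ω (i : Fin n) => (M (p + i) ω, Q (p + i) ω)) :=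
      fun p => measurable_pi_lambda _ fun i => hmeas (p + i)
    have hpre : ∀ p : ℕ, (fun ω (i : Fin n) => (M (p + i) ω, Q (p + i) ω)) ⁻¹' {y | c < E y}
        = {ω | c < (∑ k ∈ Finset.range n, (∏ i ∈ Finset.range k, M (p + i) ω) * Q (p + k) ω)
            / ∏ i ∈ Finset.range n, M (p + i) ω} := by
      intro p
      ext ω
      have hz : E (fun i : Fin n => (M (p + ↑i) ω, Q (p + ↑i) ω))
          = (∑ k ∈ Finset.range n, (∏ i ∈ Finset.range k, M (p + i) ω) * Q (p + k) ω)
            / ∏ i ∈ Finset.range n, M (p + i) ω :=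
        hEapp (fun j : ℕ => (M (p + j) ω, Q (p + j) ω))
      simp only [Set.mem_preimage, Set.mem_setOf_eq, hz]
    have e1 : P {ω | c < (∑ k ∈ Finset.range n,
          (∏ i ∈ Finset.range k, M (1+i) ω) * Q (1+k) ω) / ∏ i ∈ Finset.range n, M (1+i) ω}
        = (P.map (fun ω (i : Fin n) => (M (1 + i) ω, Q (1 + i) ω))) {y | c < E y} := by
      rw [Measure.map_apply (hVmeas 1) hBmeas, hpre 1]
    have e0 : P {ω | c < (∑ j ∈ Finset.range n, (∏ i ∈ Finset.range j, M i ω) * Q j ω) /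
          ∏ i ∈ Finset.range n, M i ω}
        = (P.map (fun ω (i : Fin n) => (M (0 + i) ω, Q (0 + i) ω))) {y | c < E y} := by
      rw [Measure.map_apply (hVmeas 0) hBmeas, hpre 0]
      simp only [Nat.zero_add]
    rw [e1, e0, hlaw 1, hlaw 0]
  -- Step I: the tail beyond 1+n is a.s. a real number, hence bounded below with positive prob
  have hTfin : ∃ c : ℕ, 0 < P {ω | -(c : ℝ) <
      ∑' k, (∏ i ∈ Finset.Ico (1+n) (1+n+k), M i ω) * Q (1+n+k) ω} := by
    by_contra hcon
    push_neg at hcon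
    have h0 : P (⋃ c : ℕ, {ω | -(c : ℝ) <
        ∑' k, (∏ i ∈ Finset.Ico (1+n) (1+n+k), M i ω) * Q (1+n+k) ω}) = 0 :=
      measure_iUnion_null fun c => le_antisymm (hcon c) zero_le
    have huniv : (⋃ c : ℕ, {ω | -(c : ℝ) <
        ∑' k, (∏ i ∈ Finset.Ico (1+n) (1+n+k), M i ω) * Q (1+n+k) ω}) = Set.univ := by
      ext ω
      simp only [Set.mem_iUnion, Set.mem_setOf_eq, Set.mem_univ, iff_true]
      obtain ⟨c, hc⟩ := exists_nat_gt
        (-(∑' k, (∏ i ∈ Finset.Ico (1+n) (1+n+k), M i ω) * Q (1+n+k) ω))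
      exact ⟨c, by linarith⟩
    rw [huniv, measure_univ] at h0
    exact one_ne_zero h0
  obtain ⟨c, hcB⟩ := hTfin
  -- measurability of the tails w.r.t. the tail σ-algebras
  have hTmeas : ∀ p : ℕ, Measurable[⨆ i ∈ {i : ℕ | p ≤ i},
      MeasurableSpace.comap (fun ω => (M i ω, Q i ω)) inferInstance]
      (fun ω => ∑' k, (∏ i ∈ Finset.Ico p (p+k), M i ω) * Q (p+k) ω) := by
    intro p
    refine measurable_tsum_of_measurable' fun k => ?_
    refine Measurable.mul ?_ (hQc _ _ (by simp only [Set.mem_setOf_eq]; omega))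
    refine Finset.measurable_prod _ fun i hi => ?_
    exact hMc _ _ (by simp only [Set.mem_setOf_eq]; exact (Finset.mem_Ico.mp hi).1)
  -- Step II: the middle block is positive with positive probability
  have hA : 0 < P {ω | (c : ℝ) < (∑ k ∈ Finset.range n,
      (∏ i ∈ Finset.range k, M (1+i) ω) * Q (1+k) ω) / ∏ i ∈ Finset.range n, M (1+i) ω} := by
    rw [hshift]; exact hYA c
  have hAmeas : MeasurableSet[⨆ i ∈ {i : ℕ | 1 ≤ i ∧ i < 1 + n},
      MeasurableSpace.comap (fun ω => (M i ω, Q i ω)) inferInstance]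
      {ω | (c : ℝ) < (∑ k ∈ Finset.range n,
        (∏ i ∈ Finset.range k, M (1+i) ω) * Q (1+k) ω) / ∏ i ∈ Finset.range n, M (1+i) ω} := by
    refine measurableSet_lt measurable_const (Measurable.div ?_ ?_)
    · refine Finset.measurable_sum _ fun k hk => ?_
      have hkn := Finset.mem_range.mp hk
      refine Measurable.mul ?_ (hQc _ _ (by simp only [Set.mem_setOf_eq]; omega))
      refine Finset.measurable_prod _ fun i hi => ?_
      have := Finset.mem_range.mp hi
      exact hMc _ _ (by simp only [Set.mem_setOf_eq]; omega)
    · refine Finset.measurable_prod _ fun i hi => ?_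
      have := Finset.mem_range.mp hi
      exact hMc _ _ (by simp only [Set.mem_setOf_eq]; omega)
  have hBmeas2 : MeasurableSet[⨆ i ∈ {i : ℕ | 1 + n ≤ i},
      MeasurableSpace.comap (fun ω => (M i ω, Q i ω)) inferInstance]
      {ω | -(c : ℝ) < ∑' k, (∏ i ∈ Finset.Ico (1+n) (1+n+k), M i ω) * Q (1+n+k) ω} :=
    measurableSet_lt measurable_const (hTmeas (1+n))
  have hprod := hindep' {i | 1 ≤ i ∧ i < 1 + n} {i | 1 + n ≤ i}
    (by rw [Set.disjoint_left]; intro i hi1 hi2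
        simp only [Set.mem_setOf_eq] at hi1 hi2; omega)
    _ _ hAmeas hBmeas2
  have hABpos : 0 < P ({ω | (c : ℝ) < (∑ k ∈ Finset.range n,
      (∏ i ∈ Finset.range k, M (1+i) ω) * Q (1+k) ω) / ∏ i ∈ Finset.range n, M (1+i) ω}
      ∩ {ω | -(c : ℝ) < ∑' k, (∏ i ∈ Finset.Ico (1+n) (1+n+k), M i ω) * Q (1+n+k) ω}) := by
    rw [hprod]; exact ENNReal.mul_pos hA.ne' hcB.ne'
  have hT1pos : 0 < P {ω | 0 < ∑' k, (∏ i ∈ Finset.Ico 1 (1+k), M i ω) * Q (1+k) ω} := by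
    refine lt_of_lt_of_le hABpos (measure_mono_ae ?_)
    filter_upwards [hsum] with ω hs hω
    have h1 := hω.1
    have h2 := hω.2
    simp only [Set.mem_setOf_eq] at h1 h2 ⊢
    have eq1 : ∀ k, ∏ i ∈ Finset.Ico 1 (1+k), M i ω = ∏ i ∈ Finset.range k, M (1+i) ω := by
      intro k
      rw [Finset.prod_Ico_eq_prod_range]
      simp [Nat.add_sub_cancel_left]
    have hD : 0 < ∏ i ∈ Finset.range n, M (1+i) ω :=
      Finset.prod_pos fun i _ => hMpos _ ω
    have hnum : (c : ℝ) * (∏ i ∈ Finset.range n, M (1+i) ω)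
        < ∑ k ∈ Finset.range n, (∏ i ∈ Finset.range k, M (1+i) ω) * Q (1+k) ω :=
      (lt_div_iff₀ hD).mp h1
    have htail := mul_lt_mul_of_pos_left h2 hD
    have hk := key ω hs 1 n
    have hsumeq : ∑ k ∈ Finset.range n, (∏ i ∈ Finset.Ico 1 (1+k), M i ω) * Q (1+k) ω
        = ∑ k ∈ Finset.range n, (∏ i ∈ Finset.range k, M (1+i) ω) * Q (1+k) ω :=
      Finset.sum_congr rfl fun k _ => by rw [eq1 k]
    show (0:ℝ) < ∑' k, (∏ i ∈ Finset.Ico 1 (1+k), M i ω) * Q (1+k) ω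
    rw [hk, hsumeq, eq1 n]
    nlinarith [hnum, htail]
  -- Step III: conclude
  have hA2meas : MeasurableSet[⨆ i ∈ {i : ℕ | i < 1},
      MeasurableSpace.comap (fun ω => (M i ω, Q i ω)) inferInstance] {ω | N < Q 0 ω} :=
    measurableSet_lt measurable_const (hQc _ 0 (by simp))
  have hB2meas : MeasurableSet[⨆ i ∈ {i : ℕ | 1 ≤ i},
      MeasurableSpace.comap (fun ω => (M i ω, Q i ω)) inferInstance]
      {ω | 0 < ∑' k, (∏ i ∈ Finset.Ico 1 (1+k), M i ω) * Q (1+k) ω} :=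
    measurableSet_lt measurable_const (hTmeas 1)
  have hprod2 := hindep' {i | i < 1} {i | 1 ≤ i}
    (by rw [Set.disjoint_left]; intro i hi1 hi2
        simp only [Set.mem_setOf_eq] at hi1 hi2; omega)
    _ _ hA2meas hB2meas
  have hpos2 : 0 < P ({ω | N < Q 0 ω}
      ∩ {ω | 0 < ∑' k, (∏ i ∈ Finset.Ico 1 (1+k), M i ω) * Q (1+k) ω}) := by
    rw [hprod2]; exact ENNReal.mul_pos (hQ1 N).ne' hT1pos.ne'
  refine lt_of_lt_of_le hpos2 (measure_mono_ae ?_)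
  filter_upwards [hsum] with ω hs hω
  have h1 := hω.1
  have h2 := hω.2
  simp only [Set.mem_setOf_eq] at h1 h2 ⊢
  have hgoal : ∑' k, (∏ i ∈ Finset.range k, M i ω) * Q k ω
      = ∑' k, (∏ i ∈ Finset.Ico 0 (0+k), M i ω) * Q (0+k) ω :=
    tsum_congr fun k => by rw [Nat.zero_add, Nat.Ico_zero_eq_range]
  have hk := key ω hs 0 1
  show N < ∑' k, (∏ i ∈ Finset.range k, M i ω) * Q k ω
  rw [hgoal, hk]
  simp only [Nat.zero_add, Finset.sum_range_one, Finset.Ico_self, Finset.range_zero, Finset.prod_empty, one_mul,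
    Nat.Ico_zero_eq_range, Finset.prod_range_one]
  have h3 : 0 < M 0 ω * (∑' k, (∏ i ∈ Finset.Ico 1 (1+k), M i ω) * Q (1+k) ω) :=
    mul_pos (hMpos 0 ω) h2
  linarith
end

section
/- Let W be a standard Brownian motion, σ ≠ 0, K > 0, and t > s > 0. Then the random variable ζ̃ := K e^{σ(W_t − W_s)} − e^{σW_t} ∫₀^t e^{σW_r} dr is unbounded from above. -/
open MeasureTheory ProbabilityTheory Real
open scoped ENNReal NNReal

lemma lintegral_exp_gaussianReal (c : ℝ) (v : NNReal) :
    ∫⁻ x, ENNReal.ofReal (Real.exp (c * x)) ∂(gaussianReal 0 v)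
      = ENNReal.ofReal (Real.exp (c ^ 2 * v / 2)) := by
  by_cases hv : v = 0
  · subst hv
    rw [gaussianReal_zero_var, lintegral_dirac' _ ((measurable_id'.const_mul c).exp.ennreal_ofReal)]
    norm_num
  · have hv' : (v : ℝ) ≠ 0 := by exact_mod_cast hv
    rw [gaussianReal_of_var_ne_zero _ hv,
      lintegral_withDensity_eq_lintegral_mul _ (measurable_gaussianPDF _ _)
        ((measurable_id'.const_mul c).exp.ennreal_ofReal)]
    have hre : ∀ x : ℝ, gaussianPDFReal 0 v x * Real.exp (c * x)
        = Real.exp (c ^ 2 * v / 2) * gaussianPDFReal (c * v) v x := by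
      intro x
      have h1 : gaussianPDFReal 0 v x * Real.exp (c * x)
          = (Real.sqrt (2 * π * v))⁻¹ * Real.exp (-(x - 0) ^ 2 / (2 * v) + c * x) := by
        simp only [gaussianPDFReal, Real.exp_add]; ring
      have h2 : Real.exp (c ^ 2 * v / 2) * gaussianPDFReal (c * v) v x
          = (Real.sqrt (2 * π * v))⁻¹ * Real.exp (-(x - c * v) ^ 2 / (2 * v) + c ^ 2 * v / 2) := by
        simp only [gaussianPDFReal, Real.exp_add]; ring
      rw [h1, h2]
      congr 1
      field_simp
      ring
    have hpt : ∀ x : ℝ, (gaussianPDF 0 v * fun x => ENNReal.ofReal (Real.exp (c * x))) x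
        = ENNReal.ofReal (Real.exp (c ^ 2 * v / 2))
          * ENNReal.ofReal (gaussianPDFReal (c * v) v x) := by
      intro x
      simp only [Pi.mul_apply, gaussianPDF]
      rw [← ENNReal.ofReal_mul (gaussianPDFReal_nonneg _ _ _),
        ← ENNReal.ofReal_mul (Real.exp_nonneg _), hre x]
    rw [lintegral_congr hpt, lintegral_const_mul' _ _ ENNReal.ofReal_ne_top,
      lintegral_gaussianPDFReal_eq_one (c * v) hv, mul_one]

set_option maxHeartbeats 2000000 in
/-- For a standard Brownian motion `W`, `σ ≠ 0`, `K > 0`, `t > s > 0`, the random variable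
`ζ̃ = K e^{σ(W_t - W_s)} - e^{σ W_t} ∫₀^t e^{σ W_r} dr` is unbounded from above. -/
theorem stmt10 {Ω : Type*} [MeasurableSpace Ω] (P : Measure Ω) [IsProbabilityMeasure P]
    (W : ℝ → Ω → ℝ) (hmeas : ∀ t, Measurable (W t))
    (hW0 : ∀ ω, W 0 ω = 0)
    (hcont : ∀ ω, Continuous (fun t => W t ω))
    (hgauss : ∀ s t : ℝ, 0 ≤ s → s ≤ t →
      P.map (fun ω => W t ω - W s ω) = gaussianReal 0 (Real.toNNReal (t - s)))
    (hindep : ∀ s t : ℝ, 0 ≤ s → s ≤ t →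
      Indep (MeasurableSpace.comap (fun ω => W t ω - W s ω) inferInstance)
        (⨆ r : Set.Icc (0 : ℝ) s, MeasurableSpace.comap (W r) inferInstance) P)
    (σ K s t : ℝ) (hσ : σ ≠ 0) (hK : 0 < K) (hs : 0 < s) (hst : s < t) :
    ∀ N : ℝ, 0 < P {ω |
      N < K * Real.exp (σ * (W t ω - W s ω)) -
        Real.exp (σ * W t ω) * ∫ r in (0 : ℝ)..t, Real.exp (σ * W r ω)} := by
  intro N0
  have hsub : {ω | max N0 0 < K * Real.exp (σ * (W t ω - W s ω)) -
        Real.exp (σ * W t ω) * ∫ r in (0 : ℝ)..t, Real.exp (σ * W r ω)}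
      ⊆ {ω | N0 < K * Real.exp (σ * (W t ω - W s ω)) -
        Real.exp (σ * W t ω) * ∫ r in (0 : ℝ)..t, Real.exp (σ * W r ω)} :=
    by intro ω h; exact lt_of_le_of_lt (le_max_left N0 0) h
  refine lt_of_lt_of_le ?_ (measure_mono hsub)
  set N := max N0 0 with hNdef
  have hN0 : 0 ≤ N := le_max_right _ _
  by_contra hcon
  push_neg at hcon
  have h0 : P {ω | N < K * Real.exp (σ * (W t ω - W s ω)) -
      Real.exp (σ * W t ω) * ∫ r in (0 : ℝ)..t, Real.exp (σ * W r ω)} = 0 :=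
    le_antisymm hcon (by positivity)
  have hae : ∀ᵐ ω ∂P, K * Real.exp (σ * (W t ω - W s ω)) -
      Real.exp (σ * W t ω) * ∫ r in (0 : ℝ)..t, Real.exp (σ * W r ω) ≤ N := by
    rw [ae_iff]
    simpa only [not_le] using h0
  have ht0 : 0 < t := hs.trans hst
  have hσ2 : 0 < σ ^ 2 := lt_of_le_of_ne (sq_nonneg σ) (Ne.symm (pow_ne_zero 2 hσ))
  have hincM : ∀ u u' : ℝ, Measurable fun ω => W u' ω - W u ω :=
    fun u u' => (hmeas u').sub (hmeas u)
  have hsuple : ∀ u : ℝ,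
      (⨆ r : Set.Icc (0:ℝ) u, MeasurableSpace.comap (W r) inferInstance)
        ≤ (inferInstance : MeasurableSpace Ω) :=
    fun u => iSup_le fun r => measurable_iff_comap_le.1 (hmeas r)
  have hWM : ∀ u u' : ℝ, 0 ≤ u → u ≤ u' →
      Measurable[⨆ r : Set.Icc (0:ℝ) u', MeasurableSpace.comap (W r) inferInstance] (W u) :=
    fun u u' hu huu' => measurable_iff_comap_le.2
      (le_iSup (fun r : Set.Icc (0:ℝ) u' => MeasurableSpace.comap (W (r:ℝ)) inferInstance)
        ⟨u, hu, huu'⟩)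
  -- moment generating function of increments
  have hmgf : ∀ u u' c : ℝ, 0 ≤ u → u ≤ u' →
      ∫⁻ ω, ENNReal.ofReal (Real.exp (c * (W u' ω - W u ω))) ∂P
        = ENNReal.ofReal (Real.exp (c ^ 2 * (u' - u) / 2)) := by
    intro u u' c hu huu'
    rw [show ∫⁻ ω, ENNReal.ofReal (Real.exp (c * (W u' ω - W u ω))) ∂P
        = ∫⁻ x, ENNReal.ofReal (Real.exp (c * x)) ∂(P.map (fun ω => W u' ω - W u ω)) from
      (lintegral_map ((measurable_id'.const_mul c).exp.ennreal_ofReal) (hincM u u')).symm,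
      hgauss u u' hu huu', lintegral_exp_gaussianReal,
      Real.coe_toNNReal _ (by linarith)]
  have hmgf0 : ∀ u c : ℝ, 0 ≤ u →
      ∫⁻ ω, ENNReal.ofReal (Real.exp (c * W u ω)) ∂P
        = ENNReal.ofReal (Real.exp (c ^ 2 * u / 2)) := by
    intro u c hu
    have h := hmgf 0 u c le_rfl hu
    simp only [hW0, sub_zero] at h
    exact h
  -- independent factorization
  have hfact : ∀ u u' c : ℝ, 0 ≤ u → u ≤ u' → ∀ g : Ω → ℝ≥0∞,
      Measurable[⨆ r : Set.Icc (0:ℝ) u, MeasurableSpace.comap (W r) inferInstance] g →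
      ∫⁻ ω, ENNReal.ofReal (Real.exp (c * (W u' ω - W u ω))) * g ω ∂P
        = ENNReal.ofReal (Real.exp (c ^ 2 * (u' - u) / 2)) * ∫⁻ ω, g ω ∂P := by
    intro u u' c hu huu' g hg
    have hmf : Measurable[MeasurableSpace.comap (fun ω => W u' ω - W u ω) inferInstance]
        (fun ω => ENNReal.ofReal (Real.exp (c * (W u' ω - W u ω)))) :=
      ((Measurable.of_comap_le le_rfl).const_mul c).exp.ennreal_ofReal
    rw [lintegral_mul_eq_lintegral_mul_lintegral_of_independent_measurableSpace
      (measurable_iff_comap_le.1 (hincM u u')) (hsuple u) (hindep u u' hu huu') hmf hg,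
      hmgf u u' c hu huu']
  -- constants
  set L := Real.log ((N + 1) / K) with hLdef
  have hKeL : K * Real.exp L = N + 1 := by
    rw [hLdef, Real.exp_log (by positivity)]
    field_simp
  set A : Set Ω := (fun ω => W t ω - W s ω) ⁻¹' {x | L < σ * x} with hAdef
  have hSB : MeasurableSet {x : ℝ | L < σ * x} :=
    measurableSet_lt measurable_const (measurable_id'.const_mul σ)
  have hAmeas : MeasurableSet A := (hincM s t) hSB
  have hAcomap : MeasurableSet[MeasurableSpace.comap (fun ω => W t ω - W s ω) inferInstance] A :=
    ⟨_, hSB, rfl⟩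
  have hPA : 0 < P A := by
    rw [hAdef, ← Measure.map_apply (hincM s t) hSB, hgauss s t hs.le hst.le]
    have hvne : (Real.toNNReal (t - s)) ≠ 0 := by
      rw [Ne, Real.toNNReal_eq_zero]
      push_neg
      linarith
    rw [pos_iff_ne_zero]
    intro hzero
    have hvol : volume {x : ℝ | L < σ * x} = 0 :=
      gaussianReal_absolutelyContinuous' 0 hvne hzero
    have hopen : IsOpen {x : ℝ | L < σ * x} :=
      isOpen_lt continuous_const (continuous_const.mul continuous_id)
    have hne : {x : ℝ | L < σ * x}.Nonempty :=
      ⟨(L + 1) / σ, by rw [Set.mem_setOf_eq, mul_div_cancel₀ _ hσ]; linarith⟩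
    exact absurd hvol (hopen.measure_pos volume hne).ne'
  set p := (P A).toReal with hpdef
  have hp : 0 < p := ENNReal.toReal_pos hPA.ne' (measure_ne_top P A)
  have hPAp : P A = ENNReal.ofReal p := (ENNReal.ofReal_toReal (measure_ne_top P A)).symm
  set C0 := s * Real.exp (σ^2*(t-s)/2 + σ^2*s/2) + (t-s) * Real.exp (5*σ^2*t/2 + 2*σ^2*s)
    with hC0def
  have hC0 : 0 < C0 :=
    add_pos (mul_pos hs (Real.exp_pos _)) (mul_pos (by linarith) (Real.exp_pos _))
  set θ := max 2 (Real.log (C0 / p) / (σ^2*s) + 1) with hθdef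
  have hθ2 : (2:ℝ) ≤ θ := le_max_left _ _
  have ha : 0 < σ^2*s := mul_pos hσ2 hs
  have hDθ : C0 * Real.exp (-(θ * (σ^2*s))) < p := by
    have h1 : Real.log (C0/p) / (σ^2*s) + 1 ≤ θ := le_max_right _ _
    have h2 : -(θ*(σ^2*s)) ≤ -(Real.log (C0/p)) - σ^2*s := by
      have hmul := mul_le_mul_of_nonneg_right h1 ha.le
      have hexpand : (Real.log (C0/p) / (σ^2*s) + 1) * (σ^2*s) = Real.log (C0/p) + σ^2*s := by
        field_simp
      rw [hexpand] at hmul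
      linarith
    have h3 : Real.exp (-(θ*(σ^2*s))) ≤ Real.exp (-(Real.log (C0/p)) - σ^2*s) :=
      Real.exp_le_exp.2 h2
    have h4 : Real.exp (-(Real.log (C0/p)) - σ^2*s) = (p / C0) * Real.exp (-(σ^2*s)) := by
      rw [Real.exp_sub, Real.exp_neg, Real.exp_log (div_pos hC0 hp), inv_div, Real.exp_neg, div_eq_mul_inv]
    have h5 : Real.exp (-(σ^2*s)) < 1 := Real.exp_lt_one_iff.2 (by linarith)
    calc C0 * Real.exp (-(θ*(σ^2*s)))
        ≤ C0 * ((p/C0) * Real.exp (-(σ^2*s))) := by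
          apply mul_le_mul_of_nonneg_left _ hC0.le
          rw [← h4]; exact h3
      _ = p * Real.exp (-(σ^2*s)) := by field_simp
      _ < p := by nlinarith [h5, hp]
  -- the weight and E1
  have hψm : Measurable[⨆ r : Set.Icc (0:ℝ) s, MeasurableSpace.comap (W r) inferInstance]
      (fun ω => ENNReal.ofReal (Real.exp (-(θ*σ) * W s ω))) :=
    ((hWM s s hs.le le_rfl).const_mul _).exp.ennreal_ofReal
  have hE1 : ∫⁻ ω, A.indicator 1 ω * ENNReal.ofReal (Real.exp (-(θ*σ) * W s ω)) ∂P
      = P A * ENNReal.ofReal (Real.exp ((-(θ*σ))^2*s/2)) := by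
    have hindm : Measurable[MeasurableSpace.comap (fun ω => W t ω - W s ω) inferInstance]
        (A.indicator (1 : Ω → ℝ≥0∞)) := by
      exact Measurable.indicator
        (@measurable_one ℝ≥0∞ Ω _ (MeasurableSpace.comap (fun ω => W t ω - W s ω) inferInstance) _)
        hAcomap
    rw [lintegral_mul_eq_lintegral_mul_lintegral_of_independent_measurableSpace
      (measurable_iff_comap_le.1 (hincM s t)) (hsuple s) (hindep s t hs.le hst.le)
      hindm hψm, lintegral_indicator_one hAmeas,
      hmgf0 s (-(θ*σ)) hs.le]
  have hJ : ∀ ω, ENNReal.ofReal (∫ r in (0:ℝ)..t, Real.exp (σ * W r ω))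
      = ∫⁻ r in Set.Ioc (0:ℝ) t, ENNReal.ofReal (Real.exp (σ * W r ω)) ∂volume := by
    intro ω
    rw [intervalIntegral.integral_of_le ht0.le]
    exact ofReal_integral_eq_lintegral_ofReal
      ((Real.continuous_exp.comp (continuous_const.mul (hcont ω))).integrableOn_Ioc)
      (Filter.Eventually.of_forall fun r => Real.exp_nonneg _)
  -- key pointwise inequality
  have key : ∀ᵐ ω ∂P,
      ENNReal.ofReal (K * Real.exp L)
          * (A.indicator 1 ω * ENNReal.ofReal (Real.exp (-(θ*σ) * W s ω)))
      ≤ ENNReal.ofReal N * (A.indicator 1 ω * ENNReal.ofReal (Real.exp (-(θ*σ) * W s ω)))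
        + ENNReal.ofReal (Real.exp (σ * W t ω + -(θ*σ) * W s ω))
          * ∫⁻ r in Set.Ioc (0:ℝ) t, ENNReal.ofReal (Real.exp (σ * W r ω)) ∂volume := by
    filter_upwards [hae] with ω hZω
    by_cases hA : ω ∈ A
    · rw [Set.indicator_of_mem hA]
      simp only [Pi.one_apply, one_mul]
      rw [← hJ ω]
      have hAlt : L < σ * (W t ω - W s ω) := hA
      have hInn : 0 ≤ ∫ r in (0:ℝ)..t, Real.exp (σ * W r ω) :=
        intervalIntegral.integral_nonneg ht0.le (fun r _ => Real.exp_nonneg _)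
      have hψpos : (0:ℝ) < Real.exp (-(θ*σ) * W s ω) := Real.exp_pos _
      have hc1 : K * Real.exp L ≤ K * Real.exp (σ * (W t ω - W s ω)) :=
        mul_le_mul_of_nonneg_left (Real.exp_le_exp.2 hAlt.le) hK.le
      have hreal : (K * Real.exp L) * Real.exp (-(θ*σ) * W s ω)
          ≤ N * Real.exp (-(θ*σ) * W s ω)
            + Real.exp (σ * W t ω + -(θ*σ) * W s ω)
              * ∫ r in (0:ℝ)..t, Real.exp (σ * W r ω) := by
        rw [Real.exp_add]
        nlinarith [mul_le_mul_of_nonneg_right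
            (show K * Real.exp (σ * (W t ω - W s ω))
              ≤ N + Real.exp (σ * W t ω) * ∫ r in (0:ℝ)..t, Real.exp (σ * W r ω) by linarith)
            hψpos.le,
          mul_le_mul_of_nonneg_right hc1 hψpos.le]
      calc ENNReal.ofReal (K * Real.exp L) * ENNReal.ofReal (Real.exp (-(θ*σ) * W s ω))
          = ENNReal.ofReal ((K * Real.exp L) * Real.exp (-(θ*σ) * W s ω)) :=
            (ENNReal.ofReal_mul (by positivity)).symm
        _ ≤ ENNReal.ofReal (N * Real.exp (-(θ*σ) * W s ω)
              + Real.exp (σ * W t ω + -(θ*σ) * W s ω)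
                * ∫ r in (0:ℝ)..t, Real.exp (σ * W r ω)) :=
            ENNReal.ofReal_le_ofReal hreal
        _ = ENNReal.ofReal (N * Real.exp (-(θ*σ) * W s ω))
              + ENNReal.ofReal (Real.exp (σ * W t ω + -(θ*σ) * W s ω)
                * ∫ r in (0:ℝ)..t, Real.exp (σ * W r ω)) :=
            ENNReal.ofReal_add (mul_nonneg hN0 (Real.exp_nonneg _))
              (mul_nonneg (Real.exp_nonneg _) hInn)
        _ = ENNReal.ofReal N * ENNReal.ofReal (Real.exp (-(θ*σ) * W s ω))
              + ENNReal.ofReal (Real.exp (σ * W t ω + -(θ*σ) * W s ω))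
                * ENNReal.ofReal (∫ r in (0:ℝ)..t, Real.exp (σ * W r ω)) := by
            rw [ENNReal.ofReal_mul hN0, ENNReal.ofReal_mul (Real.exp_nonneg _)]
    · rw [Set.indicator_of_notMem hA]
      simp only [Pi.one_apply, zero_mul, mul_zero]
      positivity
  -- integrate the key inequality
  have hInt := lintegral_mono_ae key
  rw [lintegral_const_mul' _ _ ENNReal.ofReal_ne_top, hE1] at hInt
  have hmeas1 : Measurable fun ω => ENNReal.ofReal N
      * (A.indicator 1 ω * ENNReal.ofReal (Real.exp (-(θ*σ) * W s ω))) :=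
    measurable_const.mul ((measurable_one.indicator hAmeas).mul
      (((hmeas s).const_mul _).exp.ennreal_ofReal))
  rw [lintegral_add_left hmeas1, lintegral_const_mul' _ _ ENNReal.ofReal_ne_top, hE1] at hInt
  -- Fubini for the big term
  have hUW : Measurable (Function.uncurry W) :=
    measurable_uncurry_of_continuous_of_measurable hcont hmeas
  have hWsnd : Measurable fun q : Ω × ℝ => W q.2 q.1 := hUW.comp measurable_swap
  have hFWm : Measurable fun q : Ω × ℝ =>
      ENNReal.ofReal (Real.exp (σ * W t q.1 + -(θ*σ) * W s q.1))
        * ENNReal.ofReal (Real.exp (σ * W q.2 q.1)) :=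
    (((((hmeas t).comp measurable_fst).const_mul σ).add
        (((hmeas s).comp measurable_fst).const_mul _)).exp.ennreal_ofReal).mul
      ((hWsnd.const_mul σ).exp.ennreal_ofReal)
  have hT : ∫⁻ ω, ENNReal.ofReal (Real.exp (σ * W t ω + -(θ*σ) * W s ω))
        * ∫⁻ r in Set.Ioc (0:ℝ) t, ENNReal.ofReal (Real.exp (σ * W r ω)) ∂volume ∂P
      = ∫⁻ r in Set.Ioc (0:ℝ) t, ∫⁻ ω, ENNReal.ofReal (Real.exp (σ * W t ω + -(θ*σ) * W s ω))
          * ENNReal.ofReal (Real.exp (σ * W r ω)) ∂P ∂volume :=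
    calc ∫⁻ ω, ENNReal.ofReal (Real.exp (σ * W t ω + -(θ*σ) * W s ω))
        * ∫⁻ r in Set.Ioc (0:ℝ) t, ENNReal.ofReal (Real.exp (σ * W r ω)) ∂volume ∂P
        = ∫⁻ ω, ∫⁻ r in Set.Ioc (0:ℝ) t, ENNReal.ofReal (Real.exp (σ * W t ω + -(θ*σ) * W s ω))
            * ENNReal.ofReal (Real.exp (σ * W r ω)) ∂volume ∂P :=
          lintegral_congr fun ω => (lintegral_const_mul' _ _ ENNReal.ofReal_ne_top).symm
      _ = _ := lintegral_lintegral_swap hFWm.aemeasurable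
  -- bound on (0, s]
  have hb1 : ∀ r ∈ Set.Ioc (0:ℝ) s,
      (∫⁻ ω, ENNReal.ofReal (Real.exp (σ * W t ω + -(θ*σ) * W s ω))
        * ENNReal.ofReal (Real.exp (σ * W r ω)) ∂P)
      ≤ ENNReal.ofReal (Real.exp ((-(θ*σ))^2*s/2)
          * (Real.exp (σ^2*(t-s)/2 + σ^2*s/2) * Real.exp (-(θ*(σ^2*s))))) := by
    rintro r ⟨hr0, hrs⟩
    have hg1 : Measurable[⨆ r' : Set.Icc (0:ℝ) s, MeasurableSpace.comap (W r') inferInstance]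
        (fun ω => ENNReal.ofReal (Real.exp ((1-θ)*σ * W s ω + σ * W r ω))) :=
      (((hWM s s hs.le le_rfl).const_mul _).add
        ((hWM r s hr0.le hrs).const_mul _)).exp.ennreal_ofReal
    have hg2 : Measurable[⨆ r' : Set.Icc (0:ℝ) r, MeasurableSpace.comap (W r') inferInstance]
        (fun ω => ENNReal.ofReal (Real.exp ((2-θ)*σ * W r ω))) :=
      ((hWM r r hr0.le le_rfl).const_mul _).exp.ennreal_ofReal
    calc ∫⁻ ω, ENNReal.ofReal (Real.exp (σ * W t ω + -(θ*σ) * W s ω))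
          * ENNReal.ofReal (Real.exp (σ * W r ω)) ∂P
        = ∫⁻ ω, ENNReal.ofReal (Real.exp (σ * (W t ω - W s ω)))
            * ENNReal.ofReal (Real.exp ((1-θ)*σ * W s ω + σ * W r ω)) ∂P := by
          apply lintegral_congr
          intro ω
          rw [← ENNReal.ofReal_mul (Real.exp_nonneg _), ← ENNReal.ofReal_mul (Real.exp_nonneg _),
            ← Real.exp_add, ← Real.exp_add]
          congr 1
          ring
      _ = ENNReal.ofReal (Real.exp (σ^2*(t-s)/2))
            * ∫⁻ ω, ENNReal.ofReal (Real.exp ((1-θ)*σ * W s ω + σ * W r ω)) ∂P :=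
          hfact s t σ hs.le hst.le _ hg1
      _ = ENNReal.ofReal (Real.exp (σ^2*(t-s)/2))
            * ∫⁻ ω, ENNReal.ofReal (Real.exp ((1-θ)*σ * (W s ω - W r ω)))
              * ENNReal.ofReal (Real.exp ((2-θ)*σ * W r ω)) ∂P := by
          congr 1
          apply lintegral_congr
          intro ω
          rw [← ENNReal.ofReal_mul (Real.exp_nonneg _), ← Real.exp_add]
          congr 1
          ring
      _ = ENNReal.ofReal (Real.exp (σ^2*(t-s)/2))
            * (ENNReal.ofReal (Real.exp (((1-θ)*σ)^2*(s-r)/2))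
              * ∫⁻ ω, ENNReal.ofReal (Real.exp ((2-θ)*σ * W r ω)) ∂P) := by
          rw [hfact r s ((1-θ)*σ) hr0.le hrs _ hg2]
      _ = ENNReal.ofReal (Real.exp (σ^2*(t-s)/2))
            * (ENNReal.ofReal (Real.exp (((1-θ)*σ)^2*(s-r)/2))
              * ENNReal.ofReal (Real.exp (((2-θ)*σ)^2*r/2))) := by
          rw [hmgf0 r ((2-θ)*σ) hr0.le]
      _ ≤ ENNReal.ofReal (Real.exp ((-(θ*σ))^2*s/2)
            * (Real.exp (σ^2*(t-s)/2 + σ^2*s/2) * Real.exp (-(θ*(σ^2*s))))) := by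
          rw [← ENNReal.ofReal_mul (Real.exp_nonneg _), ← ENNReal.ofReal_mul (Real.exp_nonneg _)]
          apply ENNReal.ofReal_le_ofReal
          rw [← Real.exp_add, ← Real.exp_add, ← Real.exp_add, ← Real.exp_add]
          apply Real.exp_le_exp.2
          nlinarith [mul_le_mul_of_nonneg_right
              (show ((2-θ)*σ)^2 ≤ ((1-θ)*σ)^2 by nlinarith [hσ2, hθ2]) hr0.le,
            hσ2.le, sq_nonneg ((1-θ)*σ)]
  -- bound on (s, t]
  have hb2 : ∀ r ∈ Set.Ioc s t,
      (∫⁻ ω, ENNReal.ofReal (Real.exp (σ * W t ω + -(θ*σ) * W s ω))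
        * ENNReal.ofReal (Real.exp (σ * W r ω)) ∂P)
      ≤ ENNReal.ofReal (Real.exp ((-(θ*σ))^2*s/2)
          * (Real.exp (5*σ^2*t/2 + 2*σ^2*s) * Real.exp (-(2*(θ*(σ^2*s)))))) := by
    rintro r ⟨hsr, hrt⟩
    have hr0 : (0:ℝ) < r := hs.trans hsr
    have hg1 : Measurable[⨆ r' : Set.Icc (0:ℝ) r, MeasurableSpace.comap (W r') inferInstance]
        (fun ω => ENNReal.ofReal (Real.exp (2*σ * W r ω + -(θ*σ) * W s ω))) :=
      (((hWM r r hr0.le le_rfl).const_mul _).add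
        ((hWM s r hs.le hsr.le).const_mul _)).exp.ennreal_ofReal
    have hg2 : Measurable[⨆ r' : Set.Icc (0:ℝ) s, MeasurableSpace.comap (W r') inferInstance]
        (fun ω => ENNReal.ofReal (Real.exp ((2-θ)*σ * W s ω))) :=
      ((hWM s s hs.le le_rfl).const_mul _).exp.ennreal_ofReal
    calc ∫⁻ ω, ENNReal.ofReal (Real.exp (σ * W t ω + -(θ*σ) * W s ω))
          * ENNReal.ofReal (Real.exp (σ * W r ω)) ∂P
        = ∫⁻ ω, ENNReal.ofReal (Real.exp (σ * (W t ω - W r ω)))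
            * ENNReal.ofReal (Real.exp (2*σ * W r ω + -(θ*σ) * W s ω)) ∂P := by
          apply lintegral_congr
          intro ω
          rw [← ENNReal.ofReal_mul (Real.exp_nonneg _), ← ENNReal.ofReal_mul (Real.exp_nonneg _),
            ← Real.exp_add, ← Real.exp_add]
          congr 1
          ring
      _ = ENNReal.ofReal (Real.exp (σ^2*(t-r)/2))
            * ∫⁻ ω, ENNReal.ofReal (Real.exp (2*σ * W r ω + -(θ*σ) * W s ω)) ∂P :=
          hfact r t σ hr0.le hrt _ hg1
      _ = ENNReal.ofReal (Real.exp (σ^2*(t-r)/2))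
            * ∫⁻ ω, ENNReal.ofReal (Real.exp (2*σ * (W r ω - W s ω)))
              * ENNReal.ofReal (Real.exp ((2-θ)*σ * W s ω)) ∂P := by
          congr 1
          apply lintegral_congr
          intro ω
          rw [← ENNReal.ofReal_mul (Real.exp_nonneg _), ← Real.exp_add]
          congr 1
          ring
      _ = ENNReal.ofReal (Real.exp (σ^2*(t-r)/2))
            * (ENNReal.ofReal (Real.exp ((2*σ)^2*(r-s)/2))
              * ∫⁻ ω, ENNReal.ofReal (Real.exp ((2-θ)*σ * W s ω)) ∂P) := by
          rw [hfact s r (2*σ) hs.le hsr.le _ hg2]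
      _ = ENNReal.ofReal (Real.exp (σ^2*(t-r)/2))
            * (ENNReal.ofReal (Real.exp ((2*σ)^2*(r-s)/2))
              * ENNReal.ofReal (Real.exp (((2-θ)*σ)^2*s/2))) := by
          rw [hmgf0 s ((2-θ)*σ) hs.le]
      _ ≤ ENNReal.ofReal (Real.exp ((-(θ*σ))^2*s/2)
            * (Real.exp (5*σ^2*t/2 + 2*σ^2*s) * Real.exp (-(2*(θ*(σ^2*s)))))) := by
          rw [← ENNReal.ofReal_mul (Real.exp_nonneg _), ← ENNReal.ofReal_mul (Real.exp_nonneg _)]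
          apply ENNReal.ofReal_le_ofReal
          rw [← Real.exp_add, ← Real.exp_add, ← Real.exp_add, ← Real.exp_add]
          apply Real.exp_le_exp.2
          nlinarith [mul_le_mul_of_nonneg_left (show t - r ≤ t by linarith) hσ2.le,
            mul_le_mul_of_nonneg_left (show r - s ≤ t by linarith) hσ2.le, hσ2.le]
  -- put the two bounds together
  have hTb : ∫⁻ r in Set.Ioc (0:ℝ) t, ∫⁻ ω, ENNReal.ofReal (Real.exp (σ * W t ω + -(θ*σ) * W s ω))
        * ENNReal.ofReal (Real.exp (σ * W r ω)) ∂P ∂volume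
      ≤ ENNReal.ofReal (Real.exp ((-(θ*σ))^2*s/2)
          * (Real.exp (σ^2*(t-s)/2 + σ^2*s/2) * Real.exp (-(θ*(σ^2*s)))))
          * ENNReal.ofReal s
        + ENNReal.ofReal (Real.exp ((-(θ*σ))^2*s/2)
          * (Real.exp (5*σ^2*t/2 + 2*σ^2*s) * Real.exp (-(2*(θ*(σ^2*s))))))
          * ENNReal.ofReal (t-s) := by
    rw [← Set.Ioc_union_Ioc_eq_Ioc hs.le hst.le,
      lintegral_union measurableSet_Ioc (Set.Ioc_disjoint_Ioc_of_le le_rfl)]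
    refine add_le_add ?_ ?_
    · calc ∫⁻ r in Set.Ioc (0:ℝ) s, ∫⁻ ω, ENNReal.ofReal (Real.exp (σ * W t ω + -(θ*σ) * W s ω))
            * ENNReal.ofReal (Real.exp (σ * W r ω)) ∂P ∂volume
          ≤ ∫⁻ _ in Set.Ioc (0:ℝ) s, ENNReal.ofReal (Real.exp ((-(θ*σ))^2*s/2)
              * (Real.exp (σ^2*(t-s)/2 + σ^2*s/2) * Real.exp (-(θ*(σ^2*s))))) ∂volume :=
            setLIntegral_mono measurable_const hb1
        _ = ENNReal.ofReal (Real.exp ((-(θ*σ))^2*s/2)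
              * (Real.exp (σ^2*(t-s)/2 + σ^2*s/2) * Real.exp (-(θ*(σ^2*s)))))
              * volume (Set.Ioc (0:ℝ) s) := setLIntegral_const _ _
        _ = _ := by rw [Real.volume_Ioc, sub_zero]
    · calc ∫⁻ r in Set.Ioc s t, ∫⁻ ω, ENNReal.ofReal (Real.exp (σ * W t ω + -(θ*σ) * W s ω))
            * ENNReal.ofReal (Real.exp (σ * W r ω)) ∂P ∂volume
          ≤ ∫⁻ _ in Set.Ioc s t, ENNReal.ofReal (Real.exp ((-(θ*σ))^2*s/2)
              * (Real.exp (5*σ^2*t/2 + 2*σ^2*s) * Real.exp (-(2*(θ*(σ^2*s)))))) ∂volume :=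
            setLIntegral_mono measurable_const hb2
        _ = ENNReal.ofReal (Real.exp ((-(θ*σ))^2*s/2)
              * (Real.exp (5*σ^2*t/2 + 2*σ^2*s) * Real.exp (-(2*(θ*(σ^2*s))))))
              * volume (Set.Ioc s t) := setLIntegral_const _ _
        _ = _ := by rw [Real.volume_Ioc]
  -- assemble everything
  have hfinal := hInt.trans (add_le_add_right (hT.le.trans hTb) _)
  have hL1 : ENNReal.ofReal (K * Real.exp L)
      * (P A * ENNReal.ofReal (Real.exp ((-(θ*σ))^2*s/2)))
      = ENNReal.ofReal ((N+1) * (p * Real.exp ((-(θ*σ))^2*s/2))) := by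
    rw [hPAp, ← ENNReal.ofReal_mul hp.le,
      ← ENNReal.ofReal_mul (by positivity : (0:ℝ) ≤ K * Real.exp L), hKeL]
  have hR1 : ENNReal.ofReal N * (P A * ENNReal.ofReal (Real.exp ((-(θ*σ))^2*s/2)))
      = ENNReal.ofReal (N * (p * Real.exp ((-(θ*σ))^2*s/2))) := by
    rw [hPAp, ← ENNReal.ofReal_mul hp.le, ← ENNReal.ofReal_mul hN0]
  have hn1 : (0:ℝ) ≤ Real.exp ((-(θ*σ))^2*s/2)
      * (Real.exp (σ^2*(t-s)/2 + σ^2*s/2) * Real.exp (-(θ*(σ^2*s)))) := by positivity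
  have hn2 : (0:ℝ) ≤ Real.exp ((-(θ*σ))^2*s/2)
      * (Real.exp (5*σ^2*t/2 + 2*σ^2*s) * Real.exp (-(2*(θ*(σ^2*s))))) := by positivity
  have hts : (0:ℝ) ≤ t - s := by linarith
  rw [hL1, hR1, ← ENNReal.ofReal_mul hn1, ← ENNReal.ofReal_mul hn2,
    ← ENNReal.ofReal_add (mul_nonneg hn1 hs.le) (mul_nonneg hn2 hts),
    ← ENNReal.ofReal_add (mul_nonneg hN0 (mul_nonneg hp.le (Real.exp_nonneg _)))
      (add_nonneg (mul_nonneg hn1 hs.le) (mul_nonneg hn2 hts))] at hfinal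
  have hrealineq := (ENNReal.ofReal_le_ofReal_iff
    (add_nonneg (mul_nonneg hN0 (mul_nonneg hp.le (Real.exp_nonneg _)))
      (add_nonneg (mul_nonneg hn1 hs.le) (mul_nonneg hn2 hts)))).1 hfinal
  have hmψpos : (0:ℝ) < Real.exp ((-(θ*σ))^2*s/2) := Real.exp_pos _
  have h6 : p ≤ Real.exp (σ^2*(t-s)/2 + σ^2*s/2) * Real.exp (-(θ*(σ^2*s))) * s
      + Real.exp (5*σ^2*t/2 + 2*σ^2*s) * Real.exp (-(2*(θ*(σ^2*s)))) * (t-s) := by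
    nlinarith [hrealineq, hmψpos]
  have hee : Real.exp (-(2*(θ*(σ^2*s)))) ≤ Real.exp (-(θ*(σ^2*s))) :=
    Real.exp_le_exp.2 (by nlinarith [ha, hθ2])
  have h7 : Real.exp (σ^2*(t-s)/2 + σ^2*s/2) * Real.exp (-(θ*(σ^2*s))) * s
      + Real.exp (5*σ^2*t/2 + 2*σ^2*s) * Real.exp (-(2*(θ*(σ^2*s)))) * (t-s)
      ≤ C0 * Real.exp (-(θ*(σ^2*s))) := by
    rw [hC0def]
    nlinarith [mul_le_mul_of_nonneg_left hee
      (mul_nonneg hts (Real.exp_pos (5*σ^2*t/2 + 2*σ^2*s)).le)]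
  exact absurd (h6.trans h7) (not_le.2 hDθ)
end
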